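/- Let F = (f₁,…,f_m) with each f_j differentiable on a compact convex set P. If x* ∈ P is weakly Pareto optimal and each f_j is convex, then min over u ∈ P of max over j of ⟨∇f_j(x*), u − x*⟩ equals 0 (i.e., the Frank–Wolfe gap vanishes at x*). -/

import Mathlib

open scoped RealInnerProductSpace

lemma neg_deriv_eventually_lt {φ : ℝ → ℝ} {d : ℝ} (hφ : HasDerivAt φ d 0)
    (hd : d < 0) : ∀ᶠ t in nhdsWithin (0:ℝ) (Set.Ioi 0), φ t < φ 0 := by
  have hs : Filter.Tendsto (slope φ 0) (nhdsWithin (0:ℝ) (Set.Ioi 0)) (nhds d) := by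
    have := hasDerivAt_iff_tendsto_slope.mp hφ
    exact this.mono_left (nhdsWithin_mono 0 (by intro x hx; exact ne_of_gt hx))
  have hneg : ∀ᶠ t in nhdsWithin (0:ℝ) (Set.Ioi 0), slope φ 0 t < 0 :=
    hs.eventually (Filter.Tendsto.eventually_lt_const hd Filter.tendsto_id)
  filter_upwards [hneg, self_mem_nhdsWithin] with t ht htpos
  have htpos' : (0:ℝ) < t := htpos
  rw [slope_def_field] at ht
  have h2 : (φ t - φ 0) / (t - 0) < 0 := by
    have : (t - 0) ≠ 0 := by linarith
    field_simp at ht ⊢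
    linarith [ht]
  rw [sub_zero] at h2
  rcases div_neg_iff.mp h2 with ⟨h1, h2⟩ | ⟨h1, h2⟩
  · linarith
  · linarith

theorem weak_pareto_implies_zero_gap {n m : ℕ} [NeZero m]
    (P : Set (EuclideanSpace ℝ (Fin n))) (hP : Convex ℝ P)
    (hPc : IsCompact P) (hPne : P.Nonempty)
    (f : Fin m → EuclideanSpace ℝ (Fin n) → ℝ)
    (g : Fin m → EuclideanSpace ℝ (Fin n) → EuclideanSpace ℝ (Fin n))
    (hconv : ∀ j, ConvexOn ℝ P (f j))
    (hgrad : ∀ j x, HasGradientAt (f j) (g j x) x)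
    (xstar : EuclideanSpace ℝ (Fin n)) (hx : xstar ∈ P)
    (hweak : ¬ ∃ x ∈ P, ∀ j, f j x < f j xstar) :
    IsLeast {r : ℝ | ∃ u ∈ P, r = ⨆ j : Fin m, ⟪g j xstar, u - xstar⟫} 0 := by
  constructor
  · exact ⟨xstar, hx, by simp⟩
  · rintro r ⟨u, hu, rfl⟩
    by_contra hlt
    push_neg at hlt
    set v := u - xstar with hv
    have hnegj : ∀ j, ⟪g j xstar, v⟫ < 0 := by
      intro j
      have hle : ⟪g j xstar, v⟫ ≤ ⨆ j : Fin m, ⟪g j xstar, v⟫ :=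
        le_ciSup (f := fun j : Fin m => ⟪g j xstar, v⟫)
          (Set.Finite.bddAbove (Set.finite_range _)) j
      exact lt_of_le_of_lt hle hlt
    have hγ : HasDerivAt (fun t : ℝ => xstar + t • v) v 0 := by
      have h1 : HasDerivAt (fun t : ℝ => t • v) ((1:ℝ) • v) 0 :=
        (hasDerivAt_id 0).smul_const v
      simpa [one_smul] using h1.const_add xstar
    have hγ0 : xstar + (0:ℝ) • v = xstar := by simp
    have hderiv : ∀ j, HasDerivAt (fun t : ℝ => f j (xstar + t • v)) ⟪g j xstar, v⟫ 0 := by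
      intro j
      have hf : HasFDerivAt (f j) (InnerProductSpace.toDual ℝ _ (g j xstar))
          (xstar + (0:ℝ) • v) := by rw [hγ0]; exact hgrad j xstar
      have hcomp := hf.comp_hasDerivAt 0 hγ
      simp only [InnerProductSpace.toDual_apply_apply] at hcomp
      exact hcomp
    have hev : ∀ᶠ t : ℝ in nhdsWithin (0:ℝ) (Set.Ioi 0),
        ∀ j, f j (xstar + t • v) < f j xstar := by
      rw [Filter.eventually_all]
      intro j
      have := neg_deriv_eventually_lt (hderiv j) (hnegj j)
      simpa [hγ0] using this
    have hev2 : Set.Ioc (0:ℝ) 1 ∈ nhdsWithin (0:ℝ) (Set.Ioi 0) :=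
      Ioc_mem_nhdsGT_of_mem (by norm_num)
    obtain ⟨t, ht1, ht2⟩ := ((hev.and (Filter.eventually_of_mem hev2 (fun x hx => hx))).exists)
    exact hweak ⟨xstar + t • v, hP.add_smul_sub_mem hx hu (Set.Ioc_subset_Icc_self ht2), ht1⟩
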